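/- Let 0 ≤ α < n, let σ and ω be positive locally finite Borel measures on ℝⁿ, and let 𝒟 be a dyadic grid. For Q ∈ 𝒟 set ‖P_Q^ω x‖²_{L²(ω)} := Σ_{J ∈ 𝒟, J ⊆ Q} ‖Δ_J^ω x‖²_{L²(ω)}. Define 𝒜₂^α(σ,ω) := sup_{Q∈𝒟} 𝒫^α(Q, 1_{ℝⁿ∖Q}σ) · ω(Q)/|Q|^{1−α/n}, A₂^{α,energy}(σ,ω) := sup_{Q∈𝒟} [‖P_Q^ω x‖²_{L²(ω)}/ℓ(Q)²] · σ(Q)/|Q|^{2(1−α/n)}, and the plugged energy constant 𝒜₂^{α,energy plug}(σ,ω) := sup_{Q∈𝒟} [‖P_Q^ω x‖²_{L²(ω)}/ℓ(Q)²] · 𝒫^α(Q,σ)/|Q|^{1−α/n}. Then 𝒜₂^{α,energy plug}(σ,ω) ≤ C · ( 𝒜₂^α(σ,ω) + A₂^{α,energy}(σ,ω) ), with C depending only on n and α; symmetrically, with σ and ω interchanged, 𝒜₂^{α,*,energy plug}(σ,ω) ≤ C · ( 𝒜₂^{α,*}(σ,ω) + A₂^{α,*,energy}(σ,ω) ). 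-/

import Mathlib

open MeasureTheory
open scoped ENNReal NNReal

noncomputable section

/-- An axis-parallel half-open cube in `ℝⁿ`, given by its corner `a` and side length `l`. -/
structure QCube (n : ℕ) where
  a : Fin n → ℝ
  l : ℝ

/-- The half-open cube as a subset of `ℝⁿ`. -/
def QCube.pts {n : ℕ} (Q : QCube n) : Set (EuclideanSpace ℝ (Fin n)) :=
  {x | ∀ i, Q.a i ≤ x i ∧ x i < Q.a i + Q.l}

/-- The center of a cube. -/
def QCube.center {n : ℕ} (Q : QCube n) : EuclideanSpace ℝ (Fin n) :=
  (EuclideanSpace.equiv (Fin n) ℝ).symm fun i => Q.a i + Q.l / 2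

/-- The dyadic child of a cube indexed by `e ∈ {0,1}ⁿ`. -/
def QCube.child {n : ℕ} (Q : QCube n) (e : Fin n → Bool) : QCube n :=
  ⟨fun i => Q.a i + (if e i then Q.l / 2 else 0), Q.l / 2⟩

/-- The dyadic grid on `ℝⁿ` obtained by translating the standard grid by `t`. -/
def dyadicGrid {n : ℕ} (t : Fin n → ℝ) : Set (QCube n) :=
  {Q | ∃ (k : ℤ) (m : Fin n → ℤ),
    Q = ⟨fun i => t i + (2:ℝ) ^ (-k) * (m i : ℝ), (2:ℝ) ^ (-k)⟩}

/-- `E_S^μ f`, the `μ`-average of `f` over `S` (junk value `0` when `μ(S)` is `0` or `∞`). -/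
def muAvg {n : ℕ} (μ : Measure (EuclideanSpace ℝ (Fin n)))
    (S : Set (EuclideanSpace ℝ (Fin n))) (f : EuclideanSpace ℝ (Fin n) → ℝ) : ℝ :=
  (μ S).toReal⁻¹ * ∫ x in S, f x ∂μ

/-- The martingale difference `Δ_I^μ f = Σ_{I' child of I} 1_{I'} E_{I'}^μ f − 1_I E_I^μ f`. -/
def mdiff {n : ℕ} (μ : Measure (EuclideanSpace ℝ (Fin n))) (I : QCube n)
    (f : EuclideanSpace ℝ (Fin n) → ℝ) (x : EuclideanSpace ℝ (Fin n)) : ℝ :=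
  (∑ e : Fin n → Bool,
      Set.indicator (I.child e).pts (fun _ => muAvg μ (I.child e).pts f) x)
    - Set.indicator I.pts (fun _ => muAvg μ I.pts f) x

/-- `‖Δ_I^μ x‖²_{L²(μ)} = Σᵢ ∫ (Δ_I^μ xᵢ)² dμ`, for the identity map `x` of `ℝⁿ`. -/
def energyTerm {n : ℕ} (μ : Measure (EuclideanSpace ℝ (Fin n))) (I : QCube n) : ℝ≥0∞ :=
  ∑ i : Fin n, ∫⁻ x, ENNReal.ofReal ((mdiff μ I (fun z => z i) x) ^ 2) ∂μ

/-- `‖P_Q^μ x‖²_{L²(μ)} = Σ_{J ∈ 𝒟, J ⊆ Q} ‖Δ_J^μ x‖²_{L²(μ)}`. -/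
def energySum {n : ℕ} (t : Fin n → ℝ) (μ : Measure (EuclideanSpace ℝ (Fin n)))
    (Q : QCube n) : ℝ≥0∞ :=
  ∑' J : {J : QCube n // J ∈ dyadicGrid t ∧ J.pts ⊆ Q.pts}, energyTerm μ (J : QCube n)

/-- The reproducing `α`-fractional Poisson integral
`𝒫^α(Q,μ) = ∫ (ℓ(Q)/(ℓ(Q)+|x−c_Q|)²)^{n−α} dμ(x)`, with side `t` and center `z`. -/
def reproPoisson {n : ℕ} (α t : ℝ) (z : EuclideanSpace ℝ (Fin n))
    (μ : Measure (EuclideanSpace ℝ (Fin n))) : ℝ≥0∞ :=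
  ∫⁻ x, ENNReal.ofReal ((t / (t + dist x z) ^ 2) ^ ((n : ℝ) - α)) ∂μ

/-- The one-tailed Muckenhoupt constant with holes
`𝒜₂^α(σ,ω) = sup_{Q∈𝒟} 𝒫^α(Q, 1_{ℝⁿ∖Q}σ) ω(Q)/|Q|^{1−α/n}`. -/
def A2tail (n : ℕ) (α : ℝ) (t : Fin n → ℝ)
    (σ ω : Measure (EuclideanSpace ℝ (Fin n))) : ℝ≥0∞ :=
  ⨆ Q ∈ dyadicGrid t,
    reproPoisson α Q.l Q.center (σ.restrict Q.ptsᶜ) * ω Q.pts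
      / (volume Q.pts) ^ (1 - α / (n : ℝ))

/-- The energy Muckenhoupt constant
`A₂^{α,energy}(σ,ω) = sup_{Q∈𝒟} [‖P_Q^ω x‖²/ℓ(Q)²] σ(Q)/|Q|^{2(1−α/n)}`. -/
def A2energy (n : ℕ) (α : ℝ) (t : Fin n → ℝ)
    (σ ω : Measure (EuclideanSpace ℝ (Fin n))) : ℝ≥0∞ :=
  ⨆ Q ∈ dyadicGrid t,
    energySum t ω Q / ENNReal.ofReal (Q.l ^ 2) * σ Q.pts
      / (volume Q.pts) ^ (2 * (1 - α / (n : ℝ)))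

/-- The plugged energy Muckenhoupt constant
`𝒜₂^{α,energy plug}(σ,ω) = sup_{Q∈𝒟} [‖P_Q^ω x‖²/ℓ(Q)²] 𝒫^α(Q,σ)/|Q|^{1−α/n}`. -/
def A2energyPlug (n : ℕ) (α : ℝ) (t : Fin n → ℝ)
    (σ ω : Measure (EuclideanSpace ℝ (Fin n))) : ℝ≥0∞ :=
  ⨆ Q ∈ dyadicGrid t,
    energySum t ω Q / ENNReal.ofReal (Q.l ^ 2) * reproPoisson α Q.l Q.center σ
      / (volume Q.pts) ^ (1 - α / (n : ℝ))

section Helpers19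
variable {n : ℕ}

lemma measurable_coord (i : Fin n) : Measurable fun x : EuclideanSpace ℝ (Fin n) => x i := by
  fun_prop

lemma QCube.measurableSet_pts (Q : QCube n) : MeasurableSet Q.pts := by
  have h : Q.pts = ⋂ i, ((fun x : EuclideanSpace ℝ (Fin n) => x i) ⁻¹'
      Set.Ico (Q.a i) (Q.a i + Q.l)) := by
    ext x; simp [QCube.pts, Set.mem_Ico]
  rw [h]
  exact MeasurableSet.iInter fun i => (measurable_coord i) measurableSet_Ico

lemma QCube.child_pts_subset (Q : QCube n) (hl : 0 ≤ Q.l) (e : Fin n → Bool) :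
    (Q.child e).pts ⊆ Q.pts := by
  intro x hx i
  have h := hx i
  simp only [QCube.child] at h
  constructor
  · have : Q.a i ≤ Q.a i + (if e i then Q.l / 2 else 0) := by
      split <;> linarith
    linarith [h.1]
  · have : Q.a i + (if e i then Q.l / 2 else 0) + Q.l / 2 ≤ Q.a i + Q.l := by
      split <;> linarith
    linarith [h.2]

lemma QCube.isBounded_pts (Q : QCube n) : Bornology.IsBounded Q.pts := by
  rcases Nat.eq_zero_or_pos n with h0 | h0
  · subst h0; exact (Set.toFinite _).isBounded
  rcases le_or_gt Q.l 0 with hl | hl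
  · have : Q.pts = ∅ := by
      ext x; simp only [QCube.pts, Set.mem_setOf_eq, Set.mem_empty_iff_false, iff_false]
      intro hx
      have := hx ⟨0, h0⟩
      linarith [this.1, this.2]
    simp [this]
  · rw [Metric.isBounded_iff]
    refine ⟨Real.sqrt (n * Q.l ^ 2), fun x hx y hy => ?_⟩
    rw [EuclideanSpace.dist_eq]
    apply Real.sqrt_le_sqrt
    calc ∑ i, dist (x i) (y i) ^ 2 ≤ ∑ _i : Fin n, Q.l ^ 2 := by
          apply Finset.sum_le_sum
          intro i _
          have hx' := hx i; have hy' := hy i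
          have : |x i - y i| ≤ Q.l := by
            rw [abs_le]; constructor <;> [linarith [hx'.1, hy'.2]; linarith [hx'.2, hy'.1]]
          rw [Real.dist_eq]
          nlinarith [abs_nonneg (x i - y i), sq_abs (x i - y i)]
      _ = n * Q.l ^ 2 := by simp [Finset.sum_const, nsmul_eq_mul]

lemma meas_pts_lt_top (μ : Measure (EuclideanSpace ℝ (Fin n))) [IsLocallyFiniteMeasure μ]
    (Q : QCube n) : μ Q.pts < ∞ :=
  calc μ Q.pts ≤ μ (closure Q.pts) := measure_mono subset_closure
    _ < ∞ := (Metric.isCompact_of_isClosed_isBounded isClosed_closure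
        Q.isBounded_pts.closure).measure_lt_top

lemma muAvg_coord_mem (μ : Measure (EuclideanSpace ℝ (Fin n)))
    (S : Set (EuclideanSpace ℝ (Fin n))) (hS : MeasurableSet S)
    (h0 : μ S ≠ 0) (hfin : μ S ≠ ∞) (i : Fin n) {lo hi : ℝ}
    (hb : ∀ x ∈ S, lo ≤ x i ∧ x i ≤ hi) :
    lo ≤ muAvg μ S (fun z => z i) ∧ muAvg μ S (fun z => z i) ≤ hi := by
  have hT : 0 < (μ S).toReal := ENNReal.toReal_pos h0 hfin
  have hfm : IsFiniteMeasure (μ.restrict S) := by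
    constructor; rw [Measure.restrict_apply_univ]; exact lt_of_le_of_ne le_top hfin
  have hint : Integrable (fun x : EuclideanSpace ℝ (Fin n) => x i) (μ.restrict S) := by
    refine ⟨(measurable_coord i).aestronglyMeasurable, ?_⟩
    apply HasFiniteIntegral.of_bounded (C := max |lo| |hi|)
    filter_upwards [ae_restrict_mem hS] with x hx
    exact abs_le_max_abs_abs (hb x hx).1 (hb x hx).2
  have hup : ∫ x in S, x i ∂μ ≤ hi * (μ S).toReal := by
    have := integral_mono_ae hint (integrable_const hi) ?_
    · rw [integral_const, measureReal_restrict_apply_univ, measureReal_def, smul_eq_mul] at this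
      linarith [this]
    · filter_upwards [ae_restrict_mem hS] with x hx
      exact (hb x hx).2
  have hlo : lo * (μ S).toReal ≤ ∫ x in S, x i ∂μ := by
    have := integral_mono_ae (integrable_const lo) hint ?_
    · rw [integral_const, measureReal_restrict_apply_univ, measureReal_def, smul_eq_mul] at this
      linarith [this]
    · filter_upwards [ae_restrict_mem hS] with x hx
      exact (hb x hx).1
  unfold muAvg
  constructor
  · rw [inv_mul_eq_div, le_div_iff₀ hT]; exact hlo
  · rw [inv_mul_eq_div, div_le_iff₀ hT]; exact hup

lemma mem_child_iff (Q : QCube n) {x : EuclideanSpace ℝ (Fin n)} (hx : x ∈ Q.pts)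
    (e : Fin n → Bool) :
    x ∈ (Q.child e).pts ↔ e = fun i => decide (Q.a i + Q.l / 2 ≤ x i) := by
  constructor
  · intro h
    funext i
    have hi := h i
    simp only [QCube.child] at hi
    have hxi := hx i
    cases he : e i
    · simp [he] at hi
      simp [decide_eq_false_iff_not]
      linarith [hi.2]
    · simp [he] at hi
      simp [decide_eq_true_eq]
      linarith [hi.1]
  · rintro rfl i
    have hxi := hx i
    simp only [QCube.child]
    by_cases hc : Q.a i + Q.l / 2 ≤ x i
    · simp only [decide_eq_true_eq, if_pos hc]
      exact ⟨by linarith, by linarith [hxi.2]⟩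
    · simp only [decide_eq_true_eq, if_neg hc]
      exact ⟨by linarith [hxi.1], by linarith [not_le.mp hc]⟩

lemma energyTerm_le (μ : Measure (EuclideanSpace ℝ (Fin n))) [IsLocallyFiniteMeasure μ]
    (J : QCube n) (hl : 0 < J.l) :
    energyTerm μ J ≤ n * ENNReal.ofReal (J.l ^ 2) * μ J.pts := by
  have key : ∀ i : Fin n,
      ∫⁻ x, ENNReal.ofReal ((mdiff μ J (fun z => z i) x) ^ 2) ∂μ
        ≤ ENNReal.ofReal (J.l ^ 2) * μ J.pts := by
    intro i
    set B : Set (EuclideanSpace ℝ (Fin n)) :=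
      (if μ J.pts = 0 then J.pts else ∅) ∪
        ⋃ e : Fin n → Bool, (if μ (J.child e).pts = 0 then (J.child e).pts else ∅) with hBdef
    have hB : μ B = 0 := by
      apply measure_union_null
      · split <;> simp [*]
      · rw [measure_iUnion_null_iff]
        intro e
        split <;> simp [*]
    have hae : ∀ᵐ x ∂μ, ENNReal.ofReal ((mdiff μ J (fun z => z i) x) ^ 2)
        ≤ Set.indicator J.pts (fun _ => ENNReal.ofReal (J.l ^ 2)) x := by
      filter_upwards [measure_eq_zero_iff_ae_notMem.mp hB] with x hxB
      by_cases hxJ : x ∈ J.pts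
      · -- x is in J; its unique child has positive measure
        have hJ0 : μ J.pts ≠ 0 := by
          intro h; exact hxB (Or.inl (by simp [h, hxJ]))
        set e₀ : Fin n → Bool := fun j => decide (J.a j + J.l / 2 ≤ x j) with he₀
        have hxe₀ : x ∈ (J.child e₀).pts := (mem_child_iff J hxJ e₀).mpr rfl
        have hc0 : μ (J.child e₀).pts ≠ 0 := by
          intro h
          exact hxB (Or.inr (Set.mem_iUnion.mpr ⟨e₀, by simp [h, hxe₀]⟩))
        have hsum : (∑ e : Fin n → Bool,
            Set.indicator (J.child e).pts (fun _ => muAvg μ (J.child e).pts (fun z => z i)) x)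
            = muAvg μ (J.child e₀).pts (fun z => z i) := by
          rw [Finset.sum_eq_single e₀]
          · exact Set.indicator_of_mem hxe₀ _
          · intro e _ hne
            apply Set.indicator_of_notMem
            intro hmem
            exact hne ((mem_child_iff J hxJ e).mp hmem)
          · intro h; exact absurd (Finset.mem_univ e₀) h
        have hbJ : ∀ y ∈ J.pts, J.a i ≤ y i ∧ y i ≤ J.a i + J.l := by
          intro y hy; exact ⟨(hy i).1, le_of_lt (hy i).2⟩
        have hbc : ∀ y ∈ (J.child e₀).pts, J.a i ≤ y i ∧ y i ≤ J.a i + J.l := by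
          intro y hy
          exact hbJ y (QCube.child_pts_subset J (le_of_lt hl) e₀ hy)
        have hJavg := muAvg_coord_mem μ J.pts J.measurableSet_pts hJ0
          (meas_pts_lt_top μ J).ne i hbJ
        have hcavg := muAvg_coord_mem μ (J.child e₀).pts (J.child e₀).measurableSet_pts hc0
          (meas_pts_lt_top μ (J.child e₀)).ne i hbc
        have hmd : |mdiff μ J (fun z => z i) x| ≤ J.l := by
          rw [mdiff, hsum, Set.indicator_of_mem hxJ]
          rw [abs_le]
          constructor <;> [linarith [hcavg.1, hJavg.2]; linarith [hcavg.2, hJavg.1]]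
        rw [Set.indicator_of_mem hxJ]
        apply ENNReal.ofReal_le_ofReal
        nlinarith [abs_nonneg (mdiff μ J (fun z => z i) x), sq_abs (mdiff μ J (fun z => z i) x)]
      · have hz : mdiff μ J (fun z => z i) x = 0 := by
          rw [mdiff, Set.indicator_of_notMem hxJ]
          simp only [sub_zero]
          apply Finset.sum_eq_zero
          intro e _
          apply Set.indicator_of_notMem
          intro hmem
          exact hxJ (QCube.child_pts_subset J (le_of_lt hl) e hmem)
        rw [hz]
        simp
    calc ∫⁻ x, ENNReal.ofReal ((mdiff μ J (fun z => z i) x) ^ 2) ∂μ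
        ≤ ∫⁻ x, Set.indicator J.pts (fun _ => ENNReal.ofReal (J.l ^ 2)) x ∂μ :=
          lintegral_mono_ae hae
      _ = ENNReal.ofReal (J.l ^ 2) * μ J.pts :=
          lintegral_indicator_const J.measurableSet_pts _
  calc energyTerm μ J ≤ ∑ _i : Fin n, ENNReal.ofReal (J.l ^ 2) * μ J.pts :=
        Finset.sum_le_sum fun i _ => key i
    _ = n * ENNReal.ofReal (J.l ^ 2) * μ J.pts := by
        simp [Finset.sum_const, nsmul_eq_mul, mul_assoc]

lemma grid_l_pos {t : Fin n → ℝ} {Q : QCube n} (hQ : Q ∈ dyadicGrid t) : 0 < Q.l := by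
  obtain ⟨k, m, rfl⟩ := hQ
  exact zpow_pos (by norm_num) _

lemma pts_l_le {J Q : QCube n} (hn : 0 < n) (hJ : 0 < J.l) (hQ : 0 < Q.l)
    (hsub : J.pts ⊆ Q.pts) : J.l ≤ Q.l := by
  by_contra hlt
  push_neg at hlt
  set i : Fin n := ⟨0, hn⟩
  have hcorner : (WithLp.toLp 2 (fun j => J.a j) : EuclideanSpace ℝ (Fin n)) ∈ J.pts := by
    intro j; exact ⟨le_refl _, show J.a j < J.a j + J.l by linarith⟩
  have h1 := hsub hcorner i
  have hyJ : (WithLp.toLp 2 (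
      fun j => if j = i then J.a j + Q.l else J.a j) : EuclideanSpace ℝ (Fin n)) ∈ J.pts := by
    intro j
    show (J.a j ≤ (if j = i then J.a j + Q.l else J.a j)) ∧
      (if j = i then J.a j + Q.l else J.a j) < J.a j + J.l
    by_cases hj : j = i
    · rw [if_pos hj]; exact ⟨by linarith, by linarith⟩
    · rw [if_neg hj]; exact ⟨le_refl _, by linarith⟩
  have h2 := hsub hyJ i
  rw [show (WithLp.toLp 2 (
      fun j => if j = i then J.a j + Q.l else J.a j) : EuclideanSpace ℝ (Fin n)) i = J.a i + Q.l from (if_pos rfl : (if i = i then J.a i + Q.l else J.a i) = J.a i + Q.l)] at h2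
  have h1' : Q.a i ≤ J.a i := h1.1
  linarith [h2.2]

lemma grid_scale {t : Fin n → ℝ} {J Q : QCube n} (hn : 0 < n)
    (hJ : J ∈ dyadicGrid t) (hQ : Q ∈ dyadicGrid t) (hsub : J.pts ⊆ Q.pts) :
    ∃ m : ℕ, J.l = Q.l * (2:ℝ)⁻¹ ^ m := by
  obtain ⟨kJ, mJ, hJe⟩ := hJ
  obtain ⟨kQ, mQ, hQe⟩ := hQ
  have hJl : J.l = (2:ℝ) ^ (-kJ) := by rw [hJe]
  have hQl : Q.l = (2:ℝ) ^ (-kQ) := by rw [hQe]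
  have hle : J.l ≤ Q.l := pts_l_le hn (by rw [hJl]; positivity) (by rw [hQl]; positivity) hsub
  rw [hJl, hQl] at hle
  have hk : kQ ≤ kJ := by
    have := (zpow_le_zpow_iff_right₀ (by norm_num : (1:ℝ) < 2)).mp hle
    omega
  refine ⟨(kJ - kQ).toNat, ?_⟩
  rw [hJl, hQl, ← zpow_natCast, Int.toNat_of_nonneg (by omega), inv_zpow, ← zpow_neg,
    ← zpow_add₀ (by norm_num : (2:ℝ) ≠ 0)]
  congr 1
  omega

lemma grid_disjoint {t : Fin n → ℝ} {J₁ J₂ : QCube n}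
    (h1 : J₁ ∈ dyadicGrid t) (h2 : J₂ ∈ dyadicGrid t) (hl : J₁.l = J₂.l)
    (hne : J₁ ≠ J₂) : Disjoint J₁.pts J₂.pts := by
  obtain ⟨k₁, m₁, rfl⟩ := h1
  obtain ⟨k₂, m₂, rfl⟩ := h2
  have hk : k₁ = k₂ := by
    have : (2:ℝ) ^ (-k₁) = (2:ℝ) ^ (-k₂) := hl
    have := zpow_right_injective₀ (by norm_num : (0:ℝ) < 2) (by norm_num : (2:ℝ) ≠ 1) this
    omega
  subst hk
  have hs : (0:ℝ) < (2:ℝ) ^ (-k₁) := zpow_pos (by norm_num) _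
  have hm : ∃ i, m₁ i ≠ m₂ i := by
    by_contra hc
    push_neg at hc
    exact hne (by simp only [QCube.mk.injEq]; exact ⟨funext fun i => by rw [hc i], trivial⟩)
  obtain ⟨i, hi⟩ := hm
  rw [Set.disjoint_left]
  intro x hx1 hx2
  have e1 := hx1 i
  have e2 := hx2 i
  simp only at e1 e2
  set s := (2:ℝ) ^ (-k₁)
  have q1 : s * (m₁ i : ℝ) ≤ x i - t i ∧ x i - t i < s * ((m₁ i : ℝ) + 1) := by
    constructor <;> [linarith [e1.1]; nlinarith [e1.2]]
  have q2 : s * (m₂ i : ℝ) ≤ x i - t i ∧ x i - t i < s * ((m₂ i : ℝ) + 1) := by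
    constructor <;> [linarith [e2.1]; nlinarith [e2.2]]
  have l1 : (m₁ i : ℝ) < (m₂ i : ℝ) + 1 := by
    have := lt_of_le_of_lt q1.1 q2.2
    exact lt_of_mul_lt_mul_left this (le_of_lt hs) |>.trans_le (le_refl _)
  have l2 : (m₂ i : ℝ) < (m₁ i : ℝ) + 1 := by
    have := lt_of_le_of_lt q2.1 q1.2
    exact lt_of_mul_lt_mul_left this (le_of_lt hs)
  have : m₁ i = m₂ i := by exact_mod_cast le_antisymm (by exact_mod_cast Int.lt_add_one_iff.mp (by exact_mod_cast l1)) (by exact_mod_cast Int.lt_add_one_iff.mp (by exact_mod_cast l2))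
  exact hi this

lemma geom_quarter_le : (∑' m : ℕ, ((4:ℝ≥0∞)⁻¹) ^ m) ≤ 2 := by
  calc (∑' m : ℕ, ((4:ℝ≥0∞)⁻¹) ^ m) ≤ ∑' m : ℕ, ((2:ℝ≥0∞)⁻¹) ^ m := by
        apply ENNReal.tsum_le_tsum
        intro m
        apply pow_le_pow_left' (by
          apply ENNReal.inv_le_inv.mpr; norm_num)
    _ = 2 := by
        rw [ENNReal.tsum_geometric, ENNReal.one_sub_inv_two]
        rw [inv_inv]

lemma energySum_le (t : Fin n → ℝ) (ω : Measure (EuclideanSpace ℝ (Fin n)))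
    [IsLocallyFiniteMeasure ω] (hn : 0 < n) {Q : QCube n} (hQ : Q ∈ dyadicGrid t) :
    energySum t ω Q ≤ 2 * n * ENNReal.ofReal (Q.l ^ 2) * ω Q.pts := by
  classical
  have hQl : 0 < Q.l := grid_l_pos hQ
  have hscale : ∀ J : {J : QCube n // J ∈ dyadicGrid t ∧ J.pts ⊆ Q.pts},
      ∃ m : ℕ, (J : QCube n).l = Q.l * (2:ℝ)⁻¹ ^ m := fun J => grid_scale hn J.2.1 hQ J.2.2
  set mf : {J : QCube n // J ∈ dyadicGrid t ∧ J.pts ⊆ Q.pts} → ℕ :=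
    fun J => (hscale J).choose with hmfdef
  have hmf : ∀ J : {J : QCube n // J ∈ dyadicGrid t ∧ J.pts ⊆ Q.pts},
      (J : QCube n).l = Q.l * (2:ℝ)⁻¹ ^ (mf J) := fun J => (hscale J).choose_spec
  have hpt : ∀ J : {J : QCube n // J ∈ dyadicGrid t ∧ J.pts ⊆ Q.pts},
      energyTerm ω (J : QCube n) ≤
      (n : ℝ≥0∞) * ENNReal.ofReal (Q.l ^ 2) * (((4:ℝ≥0∞)⁻¹) ^ (mf J) * ω (J : QCube n).pts) := by
    intro J
    have hJl : 0 < (J : QCube n).l := grid_l_pos J.2.1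
    have hb := energyTerm_le ω (J : QCube n) hJl
    have hreal : ((J : QCube n).l) ^ 2 = Q.l ^ 2 * ((4:ℝ)⁻¹) ^ (mf J) := by
      rw [hmf J, mul_pow, ← pow_mul, mul_comm (mf J) 2, pow_mul]
      norm_num
    have hsq : ENNReal.ofReal ((J : QCube n).l ^ 2)
        = ENNReal.ofReal (Q.l ^ 2) * ((4:ℝ≥0∞)⁻¹) ^ (mf J) := by
      rw [hreal, ENNReal.ofReal_mul (by positivity : (0:ℝ) ≤ Q.l ^ 2)]
      congr 1
      rw [ENNReal.ofReal_pow (by norm_num : (0:ℝ) ≤ 4⁻¹),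
        ENNReal.ofReal_inv_of_pos (by norm_num : (0:ℝ) < 4), ENNReal.ofReal_ofNat]
    calc energyTerm ω (J : QCube n) ≤ n * ENNReal.ofReal ((J : QCube n).l ^ 2)
          * ω (J : QCube n).pts := hb
      _ = (n : ℝ≥0∞) * ENNReal.ofReal (Q.l ^ 2)
          * (((4:ℝ≥0∞)⁻¹) ^ (mf J) * ω (J : QCube n).pts) := by rw [hsq]; ring
  have hin : (∑' J : {J : QCube n // J ∈ dyadicGrid t ∧ J.pts ⊆ Q.pts},
      ((4:ℝ≥0∞)⁻¹) ^ (mf J) * ω (J : QCube n).pts) ≤ 2 * ω Q.pts := by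
    rw [← (Equiv.sigmaFiberEquiv mf).tsum_eq
      (f := fun J => ((4:ℝ≥0∞)⁻¹) ^ (mf J) * ω (J : QCube n).pts), ENNReal.tsum_sigma']
    have hfib : ∀ m : ℕ, (∑' J : {J // mf J = m},
        ((4:ℝ≥0∞)⁻¹) ^ (mf J.1) * ω ((J.1 : QCube n)).pts)
        ≤ ((4:ℝ≥0∞)⁻¹) ^ m * ω Q.pts := by
      intro m
      have heq : ∀ J : {J // mf J = m},
          ((4:ℝ≥0∞)⁻¹) ^ (mf J.1) * ω ((J.1 : QCube n)).pts
            = ((4:ℝ≥0∞)⁻¹) ^ m * ω ((J.1 : QCube n)).pts := by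
        intro J; rw [J.2]
      rw [tsum_congr heq, ENNReal.tsum_mul_left]
      apply mul_le_mul_right _ _
      have hdis : Pairwise (Function.onFun Disjoint fun J : {J // mf J = m} => ((J.1 : QCube n)).pts) := by
        intro J₁ J₂ hne
        apply grid_disjoint J₁.1.2.1 J₂.1.2.1
        · rw [hmf J₁.1, hmf J₂.1, J₁.2, J₂.2]
        · intro h
          exact hne (Subtype.ext (Subtype.ext h))
      calc (∑' J : {J // mf J = m}, ω ((J.1 : QCube n)).pts)
          ≤ ω (⋃ J : {J // mf J = m}, ((J.1 : QCube n)).pts) :=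
            tsum_meas_le_meas_iUnion_of_disjoint ω (fun J => QCube.measurableSet_pts _) hdis
        _ ≤ ω Q.pts := measure_mono (Set.iUnion_subset fun J => J.1.2.2)
    calc (∑' m : ℕ, ∑' J : {J // mf J = m},
          ((4:ℝ≥0∞)⁻¹) ^ (mf J.1) * ω ((J.1 : QCube n)).pts)
        ≤ ∑' m : ℕ, ((4:ℝ≥0∞)⁻¹) ^ m * ω Q.pts := ENNReal.tsum_le_tsum hfib
      _ = (∑' m : ℕ, ((4:ℝ≥0∞)⁻¹) ^ m) * ω Q.pts := ENNReal.tsum_mul_right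
      _ ≤ 2 * ω Q.pts := mul_le_mul_left geom_quarter_le _
  calc energySum t ω Q
      ≤ ∑' J : {J : QCube n // J ∈ dyadicGrid t ∧ J.pts ⊆ Q.pts},
        (n : ℝ≥0∞) * ENNReal.ofReal (Q.l ^ 2) * (((4:ℝ≥0∞)⁻¹) ^ (mf J) * ω (J : QCube n).pts) :=
        ENNReal.tsum_le_tsum hpt
    _ = (n : ℝ≥0∞) * ENNReal.ofReal (Q.l ^ 2) * ∑' J : {J : QCube n // J ∈ dyadicGrid t ∧ J.pts ⊆ Q.pts},
        (((4:ℝ≥0∞)⁻¹) ^ (mf J) * ω (J : QCube n).pts) := ENNReal.tsum_mul_left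
    _ ≤ (n : ℝ≥0∞) * ENNReal.ofReal (Q.l ^ 2) * (2 * ω Q.pts) := mul_le_mul_right hin _
    _ = 2 * n * ENNReal.ofReal (Q.l ^ 2) * ω Q.pts := by ring

lemma volume_pts (Q : QCube n) (hl : 0 ≤ Q.l) :
    volume Q.pts = ENNReal.ofReal Q.l ^ n := by
  have hmp := PiLp.volume_preserving_ofLp (Fin n)
  have hpre : Q.pts = (@WithLp.ofLp 2 (Fin n → ℝ)) ⁻¹'
      (Set.univ.pi fun i => Set.Ico (Q.a i) (Q.a i + Q.l)) := by
    ext x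
    simp only [QCube.pts, Set.mem_setOf_eq, Set.mem_preimage, Set.mem_pi, Set.mem_univ,
      Set.mem_Ico, forall_true_left]
  rw [hpre, hmp.measure_preimage
    ((MeasurableSet.univ_pi fun i => measurableSet_Ico).nullMeasurableSet)]
  rw [MeasureTheory.volume_pi_pi]
  simp [Real.volume_Ico]

lemma repro_split {α lq : ℝ} (z : EuclideanSpace ℝ (Fin n))
    (σ : Measure (EuclideanSpace ℝ (Fin n))) {S : Set (EuclideanSpace ℝ (Fin n))}
    (hS : MeasurableSet S) :
    reproPoisson α lq z σ
      = reproPoisson α lq z (σ.restrict Sᶜ) + reproPoisson α lq z (σ.restrict S) := by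
  unfold reproPoisson
  rw [← lintegral_add_measure, Measure.restrict_compl_add_restrict hS]

lemma repro_restrict_le {α : ℝ} (hα : α ≤ n) {lq : ℝ} (hl : 0 < lq)
    (z : EuclideanSpace ℝ (Fin n)) (σ : Measure (EuclideanSpace ℝ (Fin n)))
    (S : Set (EuclideanSpace ℝ (Fin n))) :
    reproPoisson α lq z (σ.restrict S) ≤ ENNReal.ofReal (lq⁻¹ ^ ((n:ℝ) - α)) * σ S := by
  unfold reproPoisson
  calc ∫⁻ x, ENNReal.ofReal ((lq / (lq + dist x z) ^ 2) ^ ((n : ℝ) - α)) ∂(σ.restrict S)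
      ≤ ∫⁻ _x, ENNReal.ofReal (lq⁻¹ ^ ((n:ℝ) - α)) ∂(σ.restrict S) := by
        apply lintegral_mono
        intro x
        apply ENNReal.ofReal_le_ofReal
        apply Real.rpow_le_rpow (by positivity) _ (by linarith)
        have hd := dist_nonneg (x := x) (y := z)
        calc lq / (lq + dist x z) ^ 2 ≤ lq / lq ^ 2 := by
              gcongr
              nlinarith
          _ = lq⁻¹ := by field_simp [sq]
    _ = ENNReal.ofReal (lq⁻¹ ^ ((n:ℝ) - α)) * σ S := by
        rw [lintegral_const, Measure.restrict_apply_univ]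

lemma key_bound (hn : 1 ≤ n) {α : ℝ} (hα0 : 0 ≤ α) (hαn : α < n)
    (t : Fin n → ℝ) (σ ω : Measure (EuclideanSpace ℝ (Fin n)))
    (hσ : IsLocallyFiniteMeasure σ) (hω : IsLocallyFiniteMeasure ω) :
    A2energyPlug n α t σ ω
      ≤ ENNReal.ofReal (2 * n) * (A2tail n α t σ ω + A2energy n α t σ ω) := by
  have hnR : (0:ℝ) < n := by exact_mod_cast Nat.lt_of_lt_of_le Nat.zero_lt_one hn
  have h2n : ENNReal.ofReal (2 * (n:ℝ)) = 2 * (n : ℝ≥0∞) := by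
    rw [ENNReal.ofReal_mul (by norm_num), ENNReal.ofReal_ofNat, ENNReal.ofReal_natCast]
  rw [A2energyPlug]
  apply iSup₂_le
  intro Q hQ
  have hl : 0 < Q.l := grid_l_pos hQ
  set L := ENNReal.ofReal Q.l with hLdef
  have hL0 : L ≠ 0 := by simp [hLdef, ENNReal.ofReal_pos.mpr hl, (ENNReal.ofReal_pos.mpr hl).ne']
  have hLtop : L ≠ ∞ := ENNReal.ofReal_ne_top
  set D := L ^ ((n:ℝ) - α) with hDdef
  have hD0 : D ≠ 0 := (ENNReal.rpow_pos (lt_of_le_of_ne (by positivity) (Ne.symm hL0)) hLtop).ne'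
  have hDtop : D ≠ ∞ := ENNReal.rpow_ne_top_of_nonneg (by linarith) hLtop
  have hV : volume Q.pts = L ^ ((n:ℝ)) := by
    rw [volume_pts Q hl.le, ENNReal.rpow_natCast]
  have hVr : (volume Q.pts) ^ (1 - α / (n:ℝ)) = D := by
    rw [hV, ← ENNReal.rpow_mul]
    congr 1
    field_simp
  have hVr2 : (volume Q.pts) ^ (2 * (1 - α / (n:ℝ))) = D * D := by
    rw [hV, ← ENNReal.rpow_mul, hDdef, ← ENNReal.rpow_add _ _ hL0 hLtop]
    congr 1
    field_simp
    ring
  set E := energySum t ω Q / ENNReal.ofReal (Q.l ^ 2) with hEdef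
  set Pout := reproPoisson α Q.l Q.center (σ.restrict Q.ptsᶜ) with hPoutdef
  have hE : E ≤ 2 * n * ω Q.pts := by
    rw [hEdef, ENNReal.div_le_iff (by simp [ENNReal.ofReal_pos.mpr (by positivity : (0:ℝ) < Q.l ^ 2), (ENNReal.ofReal_pos.mpr (by positivity : (0:ℝ) < Q.l ^ 2)).ne']) ENNReal.ofReal_ne_top]
    calc energySum t ω Q ≤ 2 * n * ENNReal.ofReal (Q.l ^ 2) * ω Q.pts :=
          energySum_le t ω (by omega) hQ
      _ = 2 * n * ω Q.pts * ENNReal.ofReal (Q.l ^ 2) := by ring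
  have hK : ENNReal.ofReal (Q.l⁻¹ ^ ((n:ℝ) - α)) = D⁻¹ := by
    rw [hDdef, hLdef, ← ENNReal.ofReal_rpow_of_pos (inv_pos.mpr hl),
      ENNReal.ofReal_inv_of_pos hl, ENNReal.inv_rpow]
  have hsplit : reproPoisson α Q.l Q.center σ ≤ Pout + D⁻¹ * σ Q.pts := by
    rw [repro_split Q.center σ Q.measurableSet_pts, ← hK]
    exact add_le_add_right (repro_restrict_le (le_of_lt hαn) hl Q.center σ Q.pts) _
  calc E * reproPoisson α Q.l Q.center σ / (volume Q.pts) ^ (1 - α / (n:ℝ))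
      ≤ E * (Pout + D⁻¹ * σ Q.pts) / D := by
        rw [hVr]
        exact ENNReal.div_le_div_right (mul_le_mul_right hsplit _) _
    _ = E * Pout / D + E * (D⁻¹ * σ Q.pts) / D := by
        rw [mul_add, ENNReal.add_div]
    _ ≤ 2 * (n:ℝ≥0∞) * (A2tail n α t σ ω) + A2energy n α t σ ω := by
        apply add_le_add
        · calc E * Pout / D ≤ (2 * (n:ℝ≥0∞) * ω Q.pts) * Pout / D :=
                ENNReal.div_le_div_right (mul_le_mul_left hE _) _
            _ = 2 * (n:ℝ≥0∞) * (Pout * ω Q.pts / D) := by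
                rw [div_eq_mul_inv, div_eq_mul_inv]; ring
            _ ≤ 2 * (n:ℝ≥0∞) * A2tail n α t σ ω := by
                apply mul_le_mul_right
                have hle : Pout * ω Q.pts / D
                    = Pout * ω Q.pts / (volume Q.pts) ^ (1 - α / (n:ℝ)) := by rw [hVr]
                rw [hle, A2tail]
                exact le_iSup₂ (f := fun (Q : QCube n) (_ : Q ∈ dyadicGrid t) =>
                  reproPoisson α Q.l Q.center (σ.restrict Q.ptsᶜ) * ω Q.pts
                    / (volume Q.pts) ^ (1 - α / (n : ℝ))) Q hQ
        · have heq : E * (D⁻¹ * σ Q.pts) / D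
              = E * σ Q.pts / (volume Q.pts) ^ (2 * (1 - α / (n:ℝ))) := by
            rw [hVr2, div_eq_mul_inv, div_eq_mul_inv, ENNReal.mul_inv (Or.inl hD0) (Or.inl hDtop)]
            ring
          rw [heq, A2energy]
          exact le_iSup₂ (f := fun (Q : QCube n) (_ : Q ∈ dyadicGrid t) =>
            energySum t ω Q / ENNReal.ofReal (Q.l ^ 2) * σ Q.pts
              / (volume Q.pts) ^ (2 * (1 - α / (n : ℝ)))) Q hQ
    _ ≤ ENNReal.ofReal (2 * n) * (A2tail n α t σ ω + A2energy n α t σ ω) := by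
        rw [h2n, mul_add]
        apply add_le_add_right
        apply le_mul_of_one_le_left (by positivity)
        have : (1:ℝ≥0∞) ≤ (n:ℝ≥0∞) := by exact_mod_cast hn
        calc (1:ℝ≥0∞) ≤ (n:ℝ≥0∞) := this
          _ ≤ 2 * n := by
            nth_rewrite 1 [← one_mul (n:ℝ≥0∞)]
            exact mul_le_mul_left (by norm_num) _

end Helpers19

/-- The plugged energy Muckenhoupt constant is controlled by the
one-tailed constant with holes plus the energy constant:
`𝒜₂^{α,energy plug}(σ,ω) ≤ C (𝒜₂^α(σ,ω) + A₂^{α,energy}(σ,ω))` with `C = C(n,α)`;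
symmetrically with `σ` and `ω` interchanged. -/
theorem statement19 (n : ℕ) (α : ℝ) (hn : 1 ≤ n) (hα0 : 0 ≤ α) (hαn : α < n) :
    ∃ C : ℝ, 0 < C ∧
      ∀ (t : Fin n → ℝ) (σ ω : Measure (EuclideanSpace ℝ (Fin n))),
        IsLocallyFiniteMeasure σ → IsLocallyFiniteMeasure ω →
        A2energyPlug n α t σ ω
            ≤ ENNReal.ofReal C * (A2tail n α t σ ω + A2energy n α t σ ω) ∧
        A2energyPlug n α t ω σ
            ≤ ENNReal.ofReal C * (A2tail n α t ω σ + A2energy n α t ω σ) := by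
  refine ⟨2 * n, ?_, ?_⟩
  · have h1 : (1:ℝ) ≤ n := by exact_mod_cast hn
    linarith
  · intro t σ ω hσ hω
    exact ⟨key_bound hn hα0 hαn t σ ω hσ hω, key_bound hn hα0 hαn t ω σ hω hσ⟩
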